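/- For the fat algebra n_{(i,r)} with single Jordan block of size r at c = i, the Lie algebra g₀(n) = {X ∈ gl(4r,ℝ) : T₁X + Xᵀ T₁ = 0 and T₂X + Xᵀ T₂ = 0} (with T₁, T₂ the matrices of the two component 2-forms) has real dimension 6r. -/

import Mathlib

open Matrix

/-- The 2×2 real matrix representing a complex number `c`. -/
def Zmat (c : ℂ) : Matrix (Fin 2) (Fin 2) ℝ := !![c.re, c.im; -c.im, c.re]

/-- The `2r × 2r` real block-Jordan matrix `A(c,r)`: blocks `Z(c)` on the diagonal and
`I₂` on the (block) subdiagonal. -/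
def Amat (c : ℂ) (r : ℕ) : Matrix (Fin r × Fin 2) (Fin r × Fin 2) ℝ :=
  fun p q =>
    if p.1 = q.1 then Zmat c p.2 q.2
    else if (p.1 : ℕ) = (q.1 : ℕ) + 1 then (1 : Matrix (Fin 2) (Fin 2) ℝ) p.2 q.2
    else 0

/-- `T₁ = [[0, I_{2r}],[-I_{2r}, 0]]` on `ℝ^{4r}`, the matrix of the first bracket
component. -/
def T1mat (r : ℕ) :
    Matrix ((Fin r × Fin 2) ⊕ (Fin r × Fin 2)) ((Fin r × Fin 2) ⊕ (Fin r × Fin 2)) ℝ :=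
  Matrix.fromBlocks 0 1 (-1) 0

/-- `T₂(A) = [[0, A],[-Aᵀ, 0]]`, the matrix of the second bracket component. -/
def T2mat {r : ℕ} (A : Matrix (Fin r × Fin 2) (Fin r × Fin 2) ℝ) :
    Matrix ((Fin r × Fin 2) ⊕ (Fin r × Fin 2)) ((Fin r × Fin 2) ⊕ (Fin r × Fin 2)) ℝ :=
  Matrix.fromBlocks 0 A (-Aᵀ) 0


open Kronecker

def Wmat (c : ℂ) : Matrix (Fin 2) (Fin 2) ℝ := !![c.re, c.im; c.im, -c.re]

def J2 : Matrix (Fin 2) (Fin 2) ℝ := !![1, 0; 0, -1]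

def Dmat (r k : ℕ) : Matrix (Fin r) (Fin r) ℝ := fun p q => if (p : ℕ) = (q : ℕ) + k then 1 else 0

def Umat (r k : ℕ) : Matrix (Fin r) (Fin r) ℝ := fun p q => if (p : ℕ) + k = (q : ℕ) then 1 else 0

def Kmat (r : ℕ) : Matrix (Fin r) (Fin r) ℝ := fun p q => if (p : ℕ) + (q : ℕ) = r - 1 then 1 else 0

-- helper sum
lemma fin_sum_ite {n : ℕ} (m : ℕ) (f : Fin n → ℝ) :
    (∑ s : Fin n, if (s : ℕ) = m then f s else 0) = if h : m < n then f ⟨m, h⟩ else 0 := by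
  split_ifs with h
  · rw [Finset.sum_eq_single ⟨m, h⟩]
    · simp
    · intro b _ hb
      rw [if_neg]
      simpa [Fin.ext_iff] using hb
    · simp
  · apply Finset.sum_eq_zero
    intro s _
    rw [if_neg]
    rintro rfl
    exact h s.isLt

lemma Zmat_mul (c d : ℂ) : Zmat c * Zmat d = Zmat (c * d) := by
  ext i j
  fin_cases i <;> fin_cases j <;>
    simp [Zmat, Matrix.mul_apply, Fin.sum_univ_two, Complex.mul_re, Complex.mul_im] <;> ring

lemma Zmat_one : Zmat 1 = 1 := by
  ext i j
  fin_cases i <;> fin_cases j <;> simp [Zmat, Matrix.one_apply]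

lemma Zmat_zero : Zmat 0 = 0 := by
  ext i j
  fin_cases i <;> fin_cases j <;> simp [Zmat]

lemma Zmat_add (c d : ℂ) : Zmat (c + d) = Zmat c + Zmat d := by
  ext i j
  fin_cases i <;> fin_cases j <;> (simp [Zmat]; try ring)

lemma Zmat_smul (t : ℝ) (c : ℂ) : Zmat (t • c) = t • Zmat c := by
  ext i j
  fin_cases i <;> fin_cases j <;> simp [Zmat, Complex.smul_re, Complex.smul_im] <;> ring

lemma Zmat_transpose (c : ℂ) : (Zmat c)ᵀ = Zmat (starRingEnd ℂ c) := by
  ext i j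
  fin_cases i <;> fin_cases j <;> simp [Zmat]

lemma Zmat_conj_J2 (c : ℂ) : Zmat (starRingEnd ℂ c) * J2 = J2 * Zmat c := by
  ext i j
  fin_cases i <;> fin_cases j <;>
    simp [Zmat, J2, Matrix.mul_apply, Fin.sum_univ_two]

lemma J2_J2 : J2 * J2 = 1 := by
  ext i j
  fin_cases i <;> fin_cases j <;> simp [J2, Matrix.mul_apply, Fin.sum_univ_two, Matrix.one_apply]

lemma Dmat_zero_eq_one (r : ℕ) : Dmat r 0 = 1 := by
  ext p q
  simp [Dmat, Matrix.one_apply, Fin.ext_iff, eq_comm]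

lemma Umat_zero_eq_one (r : ℕ) : Umat r 0 = 1 := by
  ext p q
  simp [Umat, Matrix.one_apply, Fin.ext_iff]

lemma Dmat_transpose (r k : ℕ) : (Dmat r k)ᵀ = Umat r k := by
  ext p q
  simp [Dmat, Umat, Matrix.transpose_apply, eq_comm]

lemma Umat_transpose (r k : ℕ) : (Umat r k)ᵀ = Dmat r k := by
  ext p q
  simp [Dmat, Umat, Matrix.transpose_apply, eq_comm]

lemma Kmat_transpose (r : ℕ) : (Kmat r)ᵀ = Kmat r := by
  ext p q
  simp [Kmat, Matrix.transpose_apply, Nat.add_comm]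

lemma J2_transpose : J2ᵀ = J2 := by
  ext i j
  fin_cases i <;> fin_cases j <;> simp [J2]

lemma Dmat_mul_Dmat (r k l : ℕ) : Dmat r k * Dmat r l = Dmat r (l + k) := by
  ext p q
  rw [Matrix.mul_apply]
  have : ∀ s : Fin r, (if (p : ℕ) = (s : ℕ) + k then (1:ℝ) else 0) * (if (s : ℕ) = (q : ℕ) + l then 1 else 0)
      = if (s : ℕ) = (q : ℕ) + l then (if (p : ℕ) = (q : ℕ) + (l + k) then 1 else 0) else 0 := by
    intro s
    split_ifs <;> simp_all <;> omega
  simp only [Dmat, this, fin_sum_ite]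
  split_ifs with h h2 h3 <;> first | ring1 | (exfalso; omega)
lemma Umat_mul_Kmat (r k : ℕ) : Umat r k * Kmat r = Kmat r * Dmat r k := by
  ext p q
  have hp := p.isLt
  have hq := q.isLt
  rw [Matrix.mul_apply, Matrix.mul_apply]
  have h1 : ∀ s : Fin r, (Umat r k p s) * (Kmat r s q)
      = if (s : ℕ) = (p : ℕ) + k then (if (p:ℕ) + k + (q:ℕ) = r - 1 then (1:ℝ) else 0) else 0 := by
    intro s
    have hs := s.isLt
    have hp := p.isLt
    have hq := q.isLt
    simp only [Umat, Kmat]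
    split_ifs <;> first | ring1 | (exfalso; omega)
  have h2 : ∀ s : Fin r, (Kmat r p s) * (Dmat r k s q)
      = if (s : ℕ) = (q : ℕ) + k then (if (p:ℕ) + k + (q:ℕ) = r - 1 then (1:ℝ) else 0) else 0 := by
    intro s
    have hs := s.isLt
    have hp := p.isLt
    have hq := q.isLt
    simp only [Kmat, Dmat]
    split_ifs <;> first | ring1 | (exfalso; omega)
  simp only [h1, h2, fin_sum_ite]
  have hp := p.isLt
  have hq := q.isLt
  split_ifs <;> first | ring1 | (exfalso; omega)

lemma Kmat_mul_Umat (r k : ℕ) : Kmat r * Umat r k = Dmat r k * Kmat r := by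
  ext p q
  have hp := p.isLt
  have hq := q.isLt
  rw [Matrix.mul_apply, Matrix.mul_apply]
  have h1 : ∀ s : Fin r, (Kmat r p s) * (Umat r k s q)
      = if (s : ℕ) + k = (q : ℕ) then (if (p:ℕ) + (q:ℕ) = r - 1 + k then (1:ℝ) else 0) else 0 := by
    intro s
    have hs := s.isLt
    have hp := p.isLt
    have hq := q.isLt
    simp only [Kmat, Umat]
    split_ifs <;> first | ring1 | (exfalso; omega)
  have h2 : ∀ s : Fin r, (Dmat r k p s) * (Kmat r s q)
      = if (s : ℕ) + k = (p : ℕ) then (if (p:ℕ) + (q:ℕ) = r - 1 + k then (1:ℝ) else 0) else 0 := by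
    intro s
    have hs := s.isLt
    have hp := p.isLt
    have hq := q.isLt
    simp only [Dmat, Kmat]
    split_ifs <;> first | ring1 | (exfalso; omega)
  have e1 : ∀ s : Fin r, ((s : ℕ) + k = (q : ℕ)) = ((s:ℕ) = (q:ℕ) - k ∧ k ≤ (q:ℕ)) := by
    intro s; rw [eq_iff_iff]; omega
  have hp := p.isLt
  have hq := q.isLt
  simp only [h1, h2]
  by_cases hkq : k ≤ (q : ℕ)
  · by_cases hkp : k ≤ (p : ℕ)
    · have c1 : ∀ s : Fin r, (if (s : ℕ) + k = (q : ℕ) then (if (p:ℕ) + (q:ℕ) = r - 1 + k then (1:ℝ) else 0) else 0)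
          = if (s : ℕ) = (q : ℕ) - k then (if (p:ℕ) + (q:ℕ) = r - 1 + k then (1:ℝ) else 0) else 0 := by
        intro s; have hs := s.isLt; split_ifs <;> first | ring1 | (exfalso; omega)
      have c2 : ∀ s : Fin r, (if (s : ℕ) + k = (p : ℕ) then (if (p:ℕ) + (q:ℕ) = r - 1 + k then (1:ℝ) else 0) else 0)
          = if (s : ℕ) = (p : ℕ) - k then (if (p:ℕ) + (q:ℕ) = r - 1 + k then (1:ℝ) else 0) else 0 := by
        intro s; have hs := s.isLt; split_ifs <;> first | ring1 | (exfalso; omega)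
      simp only [c1, c2, fin_sum_ite]
      split_ifs <;> first | ring1 | (exfalso; omega)
    · -- k > p : RHS sum all zero; LHS value must be 0 since p+q = r-1+k needs p ≥ k? p+q ≤ p + r-1 < k + r-1
      have c2 : ∀ s : Fin r, (if (s : ℕ) + k = (p : ℕ) then (if (p:ℕ) + (q:ℕ) = r - 1 + k then (1:ℝ) else 0) else 0) = 0 := by
        intro s; have hs := s.isLt; split_ifs <;> first | ring1 | (exfalso; omega)
      have c1 : ∀ s : Fin r, (if (s : ℕ) + k = (q : ℕ) then (if (p:ℕ) + (q:ℕ) = r - 1 + k then (1:ℝ) else 0) else 0) = 0 := by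
        intro s; have hs := s.isLt; split_ifs <;> first | ring1 | (exfalso; omega)
      simp only [c1, c2, Finset.sum_const_zero]
  · have c1 : ∀ s : Fin r, (if (s : ℕ) + k = (q : ℕ) then (if (p:ℕ) + (q:ℕ) = r - 1 + k then (1:ℝ) else 0) else 0) = 0 := by
      intro s; have hs := s.isLt; split_ifs <;> first | ring1 | (exfalso; omega)
    have c2 : ∀ s : Fin r, (if (s : ℕ) + k = (p : ℕ) then (if (p:ℕ) + (q:ℕ) = r - 1 + k then (1:ℝ) else 0) else 0) = 0 := by
      intro s; have hs := s.isLt; split_ifs <;> first | ring1 | (exfalso; omega)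
    simp only [c1, c2, Finset.sum_const_zero]

lemma Kmat_mul_Kmat (r : ℕ) : Kmat r * Kmat r = 1 := by
  ext p q
  rw [Matrix.mul_apply]
  have hp := p.isLt
  have hq := q.isLt
  have h1 : ∀ s : Fin r, (Kmat r p s) * (Kmat r s q)
      = if (s : ℕ) = r - 1 - (p : ℕ) then (if (p:ℕ) = (q:ℕ) then (1:ℝ) else 0) else 0 := by
    intro s
    have hs := s.isLt
    have hp := p.isLt
    have hq := q.isLt
    simp only [Kmat]
    split_ifs <;> first | ring1 | (exfalso; omega)
  simp only [h1, fin_sum_ite, Matrix.one_apply, Fin.ext_iff]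
  split_ifs <;> first | ring1 | (exfalso; omega)
noncomputable def Lmat (r : ℕ) (a : Fin r → ℂ) : Matrix (Fin r × Fin 2) (Fin r × Fin 2) ℝ :=
  ∑ k : Fin r, Dmat r k ⊗ₖ Zmat (a k)

noncomputable def Smat (r : ℕ) : Matrix (Fin r × Fin 2) (Fin r × Fin 2) ℝ := Kmat r ⊗ₖ J2

lemma Zmat_J2_comm (c : ℂ) : Zmat c * J2 = J2 * Zmat (starRingEnd ℂ c) := by
  ext i j
  fin_cases i <;> fin_cases j <;>
    simp [Zmat, J2, Matrix.mul_apply, Fin.sum_univ_two]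

lemma Amat_eq (c : ℂ) (r : ℕ) : Amat c r = Dmat r 0 ⊗ₖ Zmat c + Dmat r 1 ⊗ₖ (1 : Matrix (Fin 2) (Fin 2) ℝ) := by
  ext p q
  rcases p with ⟨p1, p2⟩
  rcases q with ⟨q1, q2⟩
  have hp := p1.isLt
  simp only [Amat, Matrix.add_apply, Matrix.kroneckerMap_apply, Dmat, Fin.ext_iff]
  split_ifs <;> (try omega) <;> (try ring) <;> (exfalso; omega)

lemma Lmat_mul_Amat (r : ℕ) (c : ℂ) (a : Fin r → ℂ) :
    Lmat r a * Amat c r = Amat c r * Lmat r a := by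
  rw [Amat_eq, Lmat, Finset.sum_mul, Finset.mul_sum]
  congr 1
  ext k : 1
  rw [mul_add, add_mul, ← Matrix.mul_kronecker_mul, ← Matrix.mul_kronecker_mul,
    ← Matrix.mul_kronecker_mul, ← Matrix.mul_kronecker_mul,
    Dmat_mul_Dmat, Dmat_mul_Dmat, Dmat_mul_Dmat, Dmat_mul_Dmat,
    Zmat_mul, Zmat_mul, mul_comm c, mul_one (Zmat (a k)), one_mul (Zmat (a k)),
    Nat.add_comm 1 (k : ℕ), Nat.zero_add]
  norm_num

lemma Smat_transpose (r : ℕ) : (Smat r)ᵀ = Smat r := by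
  rw [Smat, ← Matrix.kroneckerMap_transpose, Kmat_transpose, J2_transpose]

lemma Smat_mul_Smat (r : ℕ) : Smat r * Smat r = 1 := by
  rw [Smat, ← Matrix.mul_kronecker_mul, Kmat_mul_Kmat, J2_J2, Matrix.one_kronecker_one]

lemma Amat_transpose (c : ℂ) (r : ℕ) :
    (Amat c r)ᵀ = Umat r 0 ⊗ₖ Zmat (starRingEnd ℂ c) + Umat r 1 ⊗ₖ (1 : Matrix (Fin 2) (Fin 2) ℝ) := by
  rw [Amat_eq, Matrix.transpose_add, ← Matrix.kroneckerMap_transpose, ← Matrix.kroneckerMap_transpose,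
    Dmat_transpose, Dmat_transpose, Zmat_transpose, Matrix.transpose_one]

lemma AmatT_mul_Smat (r : ℕ) (c : ℂ) :
    (Amat c r)ᵀ * Smat r = Smat r * Amat c r := by
  rw [Amat_transpose, Amat_eq, Smat, add_mul, mul_add, ← Matrix.mul_kronecker_mul,
    ← Matrix.mul_kronecker_mul, ← Matrix.mul_kronecker_mul, ← Matrix.mul_kronecker_mul,
    Umat_mul_Kmat, Umat_mul_Kmat, Zmat_conj_J2, one_mul J2, mul_one J2]

lemma Amat_mul_Smat (r : ℕ) (c : ℂ) :
    Amat c r * Smat r = Smat r * (Amat c r)ᵀ := by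
  rw [Amat_transpose, Amat_eq, Smat, add_mul, mul_add, ← Matrix.mul_kronecker_mul,
    ← Matrix.mul_kronecker_mul, ← Matrix.mul_kronecker_mul, ← Matrix.mul_kronecker_mul,
    Kmat_mul_Umat, Kmat_mul_Umat, Zmat_J2_comm, one_mul J2, mul_one J2]

lemma Lmat_transpose (r : ℕ) (a : Fin r → ℂ) :
    (Lmat r a)ᵀ = ∑ k : Fin r, Umat r k ⊗ₖ Zmat (starRingEnd ℂ (a k)) := by
  rw [Lmat, Matrix.transpose_sum]
  congr 1
  ext k : 1
  rw [← Matrix.kroneckerMap_transpose, Dmat_transpose, Zmat_transpose]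

lemma LmatT_mul_Smat (r : ℕ) (a : Fin r → ℂ) :
    (Lmat r a)ᵀ * Smat r = Smat r * Lmat r a := by
  rw [Lmat_transpose, Lmat, Smat, Finset.sum_mul, Finset.mul_sum]
  congr 1
  ext k : 1
  rw [← Matrix.mul_kronecker_mul, ← Matrix.mul_kronecker_mul, Umat_mul_Kmat, Zmat_conj_J2]

lemma Lmat_mul_Smat (r : ℕ) (a : Fin r → ℂ) :
    Lmat r a * Smat r = Smat r * (Lmat r a)ᵀ := by
  rw [Lmat_transpose, Lmat, Smat, Finset.sum_mul, Finset.mul_sum]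
  congr 1
  ext k : 1
  rw [← Matrix.mul_kronecker_mul, ← Matrix.mul_kronecker_mul, Kmat_mul_Umat, Zmat_J2_comm]
lemma Lmat_apply (r : ℕ) (a : Fin r → ℂ) (p q : Fin r) (i j : Fin 2) :
    Lmat r a (p, i) (q, j) =
      if h : (q : ℕ) ≤ (p : ℕ) then
        Zmat (a ⟨(p : ℕ) - (q : ℕ), lt_of_le_of_lt (Nat.sub_le _ _) p.isLt⟩) i j else 0 := by
  rw [Lmat, Matrix.sum_apply]
  have h1 : ∀ k : Fin r, (Dmat r (k : ℕ) ⊗ₖ Zmat (a k)) (p, i) (q, j)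
      = if (k : ℕ) = (p : ℕ) - (q : ℕ) then
          (if (q : ℕ) ≤ (p : ℕ) then Zmat (a k) i j else 0) else 0 := by
    intro k
    have hk := k.isLt
    have hp := p.isLt
    simp only [Matrix.kroneckerMap_apply, Dmat]
    split_ifs <;> first | ring1 | (exfalso; omega)
  simp only [h1, fin_sum_ite]
  rw [dif_pos (lt_of_le_of_lt (Nat.sub_le _ _) p.isLt)]
  split_ifs <;> rfl

lemma Lmat_eq_zero {r : ℕ} {a : Fin r → ℂ} (h : Lmat r a = 0) : a = 0 := by
  funext k
  have h0 : (0 : ℕ) < r := k.pos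
  have e1 := congrFun (congrFun h (k, 0)) (⟨0, h0⟩, 0)
  have e2 := congrFun (congrFun h (k, 0)) (⟨0, h0⟩, 1)
  rw [Lmat_apply] at e1 e2
  simp only [Nat.zero_le, dif_pos, Nat.sub_zero, Fin.eta] at e1 e2
  simp only [Zmat, Matrix.cons_val', Matrix.cons_val_zero, Matrix.cons_val_one,
    Matrix.head_cons, Matrix.empty_val', Matrix.cons_val_fin_one, Matrix.head_fin_const] at e1 e2
  apply Complex.ext
  · simpa using e1
  · simpa using e2

lemma Lmat_add (r : ℕ) (a b : Fin r → ℂ) : Lmat r (a + b) = Lmat r a + Lmat r b := by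
  rw [Lmat, Lmat, Lmat, ← Finset.sum_add_distrib]
  congr 1
  ext k : 1
  rw [Pi.add_apply, Zmat_add, Matrix.kronecker_add]

lemma Lmat_smul (r : ℕ) (t : ℝ) (a : Fin r → ℂ) : Lmat r (t • a) = t • Lmat r a := by
  rw [Lmat, Lmat, Finset.smul_sum]
  congr 1
  ext k : 1
  rw [Pi.smul_apply, Zmat_smul, Matrix.kronecker_smul]

noncomputable def Phi (r : ℕ) (v : Fin 3 → Fin r → ℂ) :
    Matrix ((Fin r × Fin 2) ⊕ (Fin r × Fin 2)) ((Fin r × Fin 2) ⊕ (Fin r × Fin 2)) ℝ :=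
  Matrix.fromBlocks (Lmat r (v 0))ᵀ (Smat r * Lmat r (v 1))
    (Lmat r (v 2) * Smat r) (-(Lmat r (v 0)))

lemma T1_cond {r : ℕ} (P Q R S₂ : Matrix (Fin r × Fin 2) (Fin r × Fin 2) ℝ)
    (hR : Rᵀ = R) (hQ : Qᵀ = Q) (hS : S₂ = -Pᵀ) :
    T1mat r * Matrix.fromBlocks P Q R S₂ + (Matrix.fromBlocks P Q R S₂)ᵀ * T1mat r = 0 := by
  subst hS
  rw [T1mat, Matrix.fromBlocks_transpose, Matrix.fromBlocks_multiply,
    Matrix.fromBlocks_multiply, Matrix.fromBlocks_add, ← Matrix.fromBlocks_zero,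
    Matrix.fromBlocks_inj]
  refine ⟨?_, ?_, ?_, ?_⟩ <;> simp [hR, hQ]

lemma T2_cond {r : ℕ} (c : ℂ) (P Q R S₂ : Matrix (Fin r × Fin 2) (Fin r × Fin 2) ℝ)
    (hR : Amat c r * R = Rᵀ * (Amat c r)ᵀ)
    (hQ : (Amat c r)ᵀ * Q = Qᵀ * Amat c r)
    (hP : (Amat c r)ᵀ * P + S₂ᵀ * (Amat c r)ᵀ = 0)
    (hS : Amat c r * S₂ + Pᵀ * Amat c r = 0) :
    T2mat (Amat c r) * Matrix.fromBlocks P Q R S₂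
      + (Matrix.fromBlocks P Q R S₂)ᵀ * T2mat (Amat c r) = 0 := by
  rw [T2mat, Matrix.fromBlocks_transpose, Matrix.fromBlocks_multiply,
    Matrix.fromBlocks_multiply, Matrix.fromBlocks_add, ← Matrix.fromBlocks_zero,
    Matrix.fromBlocks_inj]
  refine ⟨?_, ?_, ?_, ?_⟩
  · simpa using (show Amat c r * R + -(Rᵀ * (Amat c r)ᵀ) = 0 by
      rw [← sub_eq_add_neg]; exact sub_eq_zero.2 hR)
  · simpa using hS
  · simp only [Matrix.zero_mul, Matrix.mul_zero, add_zero, zero_add, Matrix.neg_mul,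
      Matrix.mul_neg, ← neg_add, hP, neg_zero]
  · simp only [Matrix.zero_mul, Matrix.mul_zero, add_zero, zero_add, Matrix.neg_mul]
    rw [hQ]
    exact neg_add_cancel _

lemma Phi_mem1 (r : ℕ) (v : Fin 3 → Fin r → ℂ) :
    T1mat r * Phi r v + (Phi r v)ᵀ * T1mat r = 0 := by
  apply T1_cond
  · rw [Matrix.transpose_mul, Smat_transpose, ← Lmat_mul_Smat]
  · rw [Matrix.transpose_mul, Smat_transpose, LmatT_mul_Smat]
  · rw [Matrix.transpose_transpose]

lemma Phi_mem2 (r : ℕ) (v : Fin 3 → Fin r → ℂ) :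
    T2mat (Amat Complex.I r) * Phi r v + (Phi r v)ᵀ * T2mat (Amat Complex.I r) = 0 := by
  apply T2_cond
  · -- A * (L v2 * S) = (L v2 * S)ᵀ * Aᵀ
    rw [Matrix.transpose_mul, Smat_transpose, ← Lmat_mul_Smat, ← mul_assoc,
      ← Lmat_mul_Amat, mul_assoc, mul_assoc, Amat_mul_Smat]
  · -- Aᵀ * (S * L v1) = (S * L v1)ᵀ * A
    rw [Matrix.transpose_mul, Smat_transpose, LmatT_mul_Smat, ← mul_assoc,
      AmatT_mul_Smat, mul_assoc, mul_assoc, Lmat_mul_Amat, ← mul_assoc]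
  · -- Aᵀ * (L v0)ᵀ + (-(L v0))ᵀ * Aᵀ = 0
    rw [Matrix.transpose_neg, Matrix.neg_mul, ← Matrix.transpose_mul, ← Matrix.transpose_mul,
      Lmat_mul_Amat]
    simp
  · -- A * (-(L v0)) + ((L v0)ᵀ)ᵀ * A = 0
    rw [Matrix.transpose_transpose, Matrix.mul_neg, Lmat_mul_Amat]
    simp
lemma mul_Amat_apply (r : ℕ) (c : ℂ) (M : Matrix (Fin r × Fin 2) (Fin r × Fin 2) ℝ)
    (p q : Fin r) (i j : Fin 2) :
    (M * Amat c r) (p, i) (q, j) =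
      (∑ k : Fin 2, M (p, i) (q, k) * Zmat c k j)
        + (if h : (q : ℕ) + 1 < r then M (p, i) (⟨(q : ℕ) + 1, h⟩, j) else 0) := by
  rw [Matrix.mul_apply, Fintype.sum_prod_type]
  have key : ∀ s : Fin r, (∑ k : Fin 2, M (p, i) (s, k) * Amat c r (s, k) (q, j))
      = (if (s : ℕ) = (q : ℕ) then (∑ k : Fin 2, M (p, i) (s, k) * Zmat c k j) else 0)
        + (if (s : ℕ) = (q : ℕ) + 1 then M (p, i) (s, j) else 0) := by
    intro s
    by_cases h1 : s = q
    · subst h1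
      rw [if_pos rfl, if_neg (show ¬ ((s:ℕ) = (s:ℕ) + 1) by omega), add_zero]
      refine Finset.sum_congr rfl (fun k _ => ?_)
      have : Amat c r (s, k) (s, j) = Zmat c k j := by simp [Amat]
      rw [this]
    · have h1' : ¬ ((s:ℕ) = (q:ℕ)) := fun h => h1 (Fin.ext h)
      rw [if_neg h1']
      by_cases h2 : (s : ℕ) = (q : ℕ) + 1
      · rw [if_pos h2, zero_add]
        simp only [Amat]
        rw [Fin.sum_univ_two]
        have hne : ¬ (s = q) := h1
        simp only [if_neg hne, if_pos h2]
        fin_cases j <;> simp [Matrix.one_apply]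
      · rw [if_neg h2, add_zero]
        simp only [Amat, if_neg h1, if_neg h2]
        simp
  rw [Finset.sum_congr rfl (fun s _ => key s), Finset.sum_add_distrib]
  congr 1
  · rw [fin_sum_ite (n := r) (q : ℕ) (fun s => ∑ k : Fin 2, M (p, i) (s, k) * Zmat c k j),
      dif_pos q.isLt]
  · rw [fin_sum_ite (n := r) ((q : ℕ) + 1) (fun s => M (p, i) (s, j))]

lemma Amat_mul_apply (r : ℕ) (c : ℂ) (M : Matrix (Fin r × Fin 2) (Fin r × Fin 2) ℝ)
    (p q : Fin r) (i j : Fin 2) :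
    (Amat c r * M) (p, i) (q, j) =
      (∑ k : Fin 2, Zmat c i k * M (p, k) (q, j))
        + (if h : 1 ≤ (p : ℕ) then M (⟨(p : ℕ) - 1, by omega⟩, i) (q, j) else 0) := by
  rw [Matrix.mul_apply, Fintype.sum_prod_type]
  have key : ∀ s : Fin r, (∑ k : Fin 2, Amat c r (p, i) (s, k) * M (s, k) (q, j))
      = (if (s : ℕ) = (p : ℕ) then (∑ k : Fin 2, Zmat c i k * M (s, k) (q, j)) else 0)
        + (if (s : ℕ) + 1 = (p : ℕ) then M (s, i) (q, j) else 0) := by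
    intro s
    by_cases h1 : p = s
    · subst h1
      rw [if_pos rfl, if_neg (show ¬ ((p:ℕ) + 1 = (p:ℕ)) by omega), add_zero]
      refine Finset.sum_congr rfl (fun k _ => ?_)
      have : Amat c r (p, i) (p, k) = Zmat c i k := by simp [Amat]
      rw [this]
    · have h1' : ¬ ((s:ℕ) = (p:ℕ)) := fun h => h1 (Fin.ext h.symm)
      rw [if_neg h1']
      by_cases h2 : (s : ℕ) + 1 = (p : ℕ)
      · rw [if_pos h2, zero_add]
        simp only [Amat]
        rw [Fin.sum_univ_two]
        simp only [if_neg h1, if_pos h2.symm]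
        fin_cases i <;> simp [Matrix.one_apply]
      · rw [if_neg h2, add_zero]
        have h2' : ¬ ((p:ℕ) = (s:ℕ) + 1) := fun h => h2 h.symm
        simp only [Amat, if_neg h1, if_neg h2']
        simp
  rw [Finset.sum_congr rfl (fun s _ => key s), Finset.sum_add_distrib]
  congr 1
  · rw [fin_sum_ite (n := r) (p : ℕ) (fun s => ∑ k : Fin 2, Zmat c i k * M (s, k) (q, j)),
      dif_pos p.isLt]
  · by_cases hp : 1 ≤ (p : ℕ)
    · have e2 : ∀ s : Fin r, (if (s : ℕ) + 1 = (p : ℕ) then M (s, i) (q, j) else 0)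
          = if (s : ℕ) = (p : ℕ) - 1 then M (s, i) (q, j) else 0 := by
        intro s
        split_ifs with h h2 h2 <;> first | rfl | (exfalso; omega)
      rw [Finset.sum_congr rfl (fun s _ => e2 s),
        fin_sum_ite (n := r) ((p : ℕ) - 1) (fun s => M (s, i) (q, j)),
        dif_pos (show (p:ℕ) - 1 < r by omega), dif_pos hp]
    · have e2 : ∀ s : Fin r, (if (s : ℕ) + 1 = (p : ℕ) then M (s, i) (q, j) else 0) = 0 := by
        intro s
        rw [if_neg (by omega)]
      rw [Finset.sum_congr rfl (fun s _ => e2 s), dif_neg hp, Finset.sum_const_zero]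
noncomputable def EE (r : ℕ) (M : Matrix (Fin r × Fin 2) (Fin r × Fin 2) ℝ)
    (P Q : ℤ) (i j : Fin 2) : ℝ :=
  if h : 0 ≤ P ∧ P < (r : ℤ) ∧ 0 ≤ Q ∧ Q < (r : ℤ) then
    M (⟨P.toNat, by omega⟩, i) (⟨Q.toNat, by omega⟩, j) else 0

lemma EE_out (r : ℕ) (M : Matrix (Fin r × Fin 2) (Fin r × Fin 2) ℝ) (P Q : ℤ) (i j : Fin 2)
    (h : ¬ (0 ≤ P ∧ P < (r : ℤ) ∧ 0 ≤ Q ∧ Q < (r : ℤ))) : EE r M P Q i j = 0 := by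
  rw [EE, dif_neg h]

lemma EE_eq (r : ℕ) (M : Matrix (Fin r × Fin 2) (Fin r × Fin 2) ℝ) (P Q : ℤ)
    (p q : Fin r) (i j : Fin 2) (hp : (p : ℤ) = P) (hq : (q : ℤ) = Q) :
    EE r M P Q i j = M (p, i) (q, j) := by
  subst hp
  subst hq
  have h1 : 0 ≤ ((p:ℕ):ℤ) ∧ ((p:ℕ):ℤ) < (r:ℤ) ∧ 0 ≤ ((q:ℕ):ℤ) ∧ ((q:ℕ):ℤ) < (r:ℤ) := by
    have := p.isLt; have := q.isLt; omega
  rw [EE, dif_pos h1]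
  simp

noncomputable def Bc (r : ℕ) (M : Matrix (Fin r × Fin 2) (Fin r × Fin 2) ℝ) (P Q : ℤ) : ℂ :=
  ⟨(EE r M P Q 0 0 + EE r M P Q 1 1)/2, (EE r M P Q 0 1 - EE r M P Q 1 0)/2⟩

noncomputable def Gc (r : ℕ) (M : Matrix (Fin r × Fin 2) (Fin r × Fin 2) ℝ) (P Q : ℤ) : ℂ :=
  ⟨(EE r M P Q 0 0 - EE r M P Q 1 1)/2, (EE r M P Q 0 1 + EE r M P Q 1 0)/2⟩

lemma Bc_out (r : ℕ) (M : Matrix (Fin r × Fin 2) (Fin r × Fin 2) ℝ) (P Q : ℤ)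
    (h : ¬ (0 ≤ P ∧ P < (r : ℤ) ∧ 0 ≤ Q ∧ Q < (r : ℤ))) : Bc r M P Q = 0 := by
  rw [Bc, EE_out r M P Q _ _ h, EE_out r M P Q _ _ h, EE_out r M P Q _ _ h,
    EE_out r M P Q _ _ h]
  norm_num [Complex.ext_iff]

lemma Gc_out (r : ℕ) (M : Matrix (Fin r × Fin 2) (Fin r × Fin 2) ℝ) (P Q : ℤ)
    (h : ¬ (0 ≤ P ∧ P < (r : ℤ) ∧ 0 ≤ Q ∧ Q < (r : ℤ))) : Gc r M P Q = 0 := by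
  rw [Gc, EE_out r M P Q _ _ h, EE_out r M P Q _ _ h, EE_out r M P Q _ _ h,
    EE_out r M P Q _ _ h]
  norm_num [Complex.ext_iff]

lemma Wmat_zero : Wmat 0 = 0 := by
  ext i j
  fin_cases i <;> fin_cases j <;> simp [Wmat]

lemma scalar_eqs (r : ℕ) (M : Matrix (Fin r × Fin 2) (Fin r × Fin 2) ℝ)
    (hM : M * Amat Complex.I r = Amat Complex.I r * M) (p q : Fin r) (i j : Fin 2) :
    (∑ k : Fin 2, M (p, i) (q, k) * Zmat Complex.I k j) + EE r M (p : ℤ) ((q : ℤ) + 1) i j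
      = (∑ k : Fin 2, Zmat Complex.I i k * M (p, k) (q, j)) + EE r M ((p : ℤ) - 1) (q : ℤ) i j := by
  have h0 : (M * Amat Complex.I r) (p, i) (q, j) = (Amat Complex.I r * M) (p, i) (q, j) := by
    rw [hM]
  rw [mul_Amat_apply, Amat_mul_apply] at h0
  have e1 : (if h : (q : ℕ) + 1 < r then M (p, i) (⟨(q : ℕ) + 1, h⟩, j) else 0)
      = EE r M (p : ℤ) ((q : ℤ) + 1) i j := by
    by_cases h : (q : ℕ) + 1 < r
    · rw [dif_pos h]
      exact (EE_eq r M ((p : ℕ) : ℤ) (((q : ℕ) : ℤ) + 1) p ⟨(q:ℕ)+1, h⟩ i j rfl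
        (by push_cast; ring)).symm
    · rw [dif_neg h, EE_out]
      have := q.isLt
      omega
  have e2 : (if h : 1 ≤ (p : ℕ) then M (⟨(p : ℕ) - 1, by have := p.isLt; omega⟩, i) (q, j) else 0)
      = EE r M ((p : ℤ) - 1) (q : ℤ) i j := by
    by_cases h : 1 ≤ (p : ℕ)
    · rw [dif_pos h]
      exact (EE_eq r M (((p : ℕ) : ℤ) - 1) ((q : ℕ) : ℤ)
        ⟨(p:ℕ) - 1, by have := p.isLt; omega⟩ q i j (by push_cast [Nat.cast_sub h]; ring) rfl).symm
    · rw [dif_neg h, EE_out]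
      omega
  rw [e1, e2] at h0
  exact h0

lemma beta_rec (r : ℕ) (M : Matrix (Fin r × Fin 2) (Fin r × Fin 2) ℝ)
    (hM : M * Amat Complex.I r = Amat Complex.I r * M) (P Q : ℤ)
    (h1 : 0 ≤ P) (h2 : P < (r : ℤ)) (h3 : 0 ≤ Q) (h4 : Q < (r : ℤ)) :
    Bc r M (P - 1) Q = Bc r M P (Q + 1) := by
  set p : Fin r := ⟨P.toNat, by omega⟩
  set q : Fin r := ⟨Q.toNat, by omega⟩
  have hp : (p : ℤ) = P := by simp [p]; omega
  have hq : (q : ℤ) = Q := by simp [q]; omega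
  have z00 : Zmat Complex.I 0 0 = 0 := by simp [Zmat]
  have z01 : Zmat Complex.I 0 1 = 1 := by simp [Zmat]
  have z10 : Zmat Complex.I 1 0 = -1 := by simp [Zmat]
  have z11 : Zmat Complex.I 1 1 = 0 := by simp [Zmat]
  have e00 := scalar_eqs r M hM p q 0 0
  have e01 := scalar_eqs r M hM p q 0 1
  have e10 := scalar_eqs r M hM p q 1 0
  have e11 := scalar_eqs r M hM p q 1 1
  simp only [Fin.sum_univ_two, z00, z01, z10, z11, hp, hq] at e00 e01 e10 e11
  apply Complex.ext
  · simp only [Bc]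
    linarith [e00, e11]
  · simp only [Bc]
    linarith [e01, e10]

lemma gamma_rec (r : ℕ) (M : Matrix (Fin r × Fin 2) (Fin r × Fin 2) ℝ)
    (hM : M * Amat Complex.I r = Amat Complex.I r * M) (P Q : ℤ)
    (h1 : 0 ≤ P) (h2 : P < (r : ℤ)) (h3 : 0 ≤ Q) (h4 : Q < (r : ℤ)) :
    Gc r M (P - 1) Q - Gc r M P (Q + 1) = 2 * Complex.I * Gc r M P Q := by
  set p : Fin r := ⟨P.toNat, by omega⟩
  set q : Fin r := ⟨Q.toNat, by omega⟩
  have hp : (p : ℤ) = P := by simp [p]; omega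
  have hq : (q : ℤ) = Q := by simp [q]; omega
  have z00 : Zmat Complex.I 0 0 = 0 := by simp [Zmat]
  have z01 : Zmat Complex.I 0 1 = 1 := by simp [Zmat]
  have z10 : Zmat Complex.I 1 0 = -1 := by simp [Zmat]
  have z11 : Zmat Complex.I 1 1 = 0 := by simp [Zmat]
  have e00 := scalar_eqs r M hM p q 0 0
  have e01 := scalar_eqs r M hM p q 0 1
  have e10 := scalar_eqs r M hM p q 1 0
  have e11 := scalar_eqs r M hM p q 1 1
  simp only [Fin.sum_univ_two, z00, z01, z10, z11, hp, hq] at e00 e01 e10 e11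
  have m00 : EE r M P Q 0 0 = M (p, 0) (q, 0) := EE_eq r M P Q p q 0 0 hp hq
  have m01 : EE r M P Q 0 1 = M (p, 0) (q, 1) := EE_eq r M P Q p q 0 1 hp hq
  have m10 : EE r M P Q 1 0 = M (p, 1) (q, 0) := EE_eq r M P Q p q 1 0 hp hq
  have m11 : EE r M P Q 1 1 = M (p, 1) (q, 1) := EE_eq r M P Q p q 1 1 hp hq
  apply Complex.ext
  · simp only [Complex.sub_re, Complex.mul_re, Complex.mul_im, Complex.re_ofNat,
      Complex.im_ofNat, Complex.I_re, Complex.I_im, Gc, m00, m01, m10, m11]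
    ring_nf
    ring_nf at e00 e11
    linarith [e00, e11]
  · simp only [Complex.sub_im, Complex.mul_re, Complex.mul_im, Complex.re_ofNat,
      Complex.im_ofNat, Complex.I_re, Complex.I_im, Gc, m00, m01, m10, m11]
    ring_nf
    ring_nf at e01 e10
    linarith [e01, e10]
lemma gamma_vanish (r : ℕ) (M : Matrix (Fin r × Fin 2) (Fin r × Fin 2) ℝ)
    (hM : M * Amat Complex.I r = Amat Complex.I r * M) (P Q : ℤ)
    (h1 : 0 ≤ P) (h2 : P < (r : ℤ)) (h3 : 0 ≤ Q) (h4 : Q < (r : ℤ)) : Gc r M P Q = 0 := by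
  suffices H : ∀ m : ℕ, ∀ P Q : ℤ, 0 ≤ P → P < (r:ℤ) → 0 ≤ Q → Q < (r:ℤ) →
      P.toNat + (r - 1 - Q.toNat) = m → Gc r M P Q = 0 by
    exact H _ P Q h1 h2 h3 h4 rfl
  intro m
  induction m using Nat.strong_induction_on with
  | _ m ih =>
    intro P Q h1 h2 h3 h4 h5
    have heq := gamma_rec r M hM P Q h1 h2 h3 h4
    have t1 : Gc r M (P - 1) Q = 0 := by
      by_cases hp : 1 ≤ P
      · exact ih ((P-1).toNat + (r - 1 - Q.toNat)) (by omega) (P-1) Q (by omega) (by omega)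
          h3 h4 rfl
      · exact Gc_out r M _ _ (by omega)
    have t2 : Gc r M P (Q + 1) = 0 := by
      by_cases hq : Q + 1 < (r:ℤ)
      · exact ih (P.toNat + (r - 1 - (Q+1).toNat)) (by omega) P (Q+1) h1 h2 (by omega) hq rfl
      · exact Gc_out r M _ _ (by omega)
    rw [t1, t2] at heq
    have h2 : (2 * Complex.I) * Gc r M P Q = 0 := by
      rw [← heq]; ring
    rcases mul_eq_zero.1 h2 with h | h
    · exact absurd h (by simp [Complex.ext_iff])
    · exact h

lemma beta_toeplitz (r : ℕ) (M : Matrix (Fin r × Fin 2) (Fin r × Fin 2) ℝ)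
    (hM : M * Amat Complex.I r = Amat Complex.I r * M) :
    ∀ n : ℕ, ∀ P Q : ℤ, 0 ≤ P → P < (r:ℤ) → 0 ≤ Q → Q < (r:ℤ) → Q.toNat = n →
    Bc r M P Q = if Q ≤ P then Bc r M (P - Q) 0 else 0 := by
  intro n
  induction n with
  | zero =>
    intro P Q h1 h2 h3 h4 h5
    have hQ0 : Q = 0 := by omega
    subst hQ0
    rw [if_pos h1, sub_zero]
  | succ n ih =>
    intro P Q h1 h2 h3 h4 h5
    have hQ : 1 ≤ Q := by omega
    have e := beta_rec r M hM P (Q - 1) h1 h2 (by omega) (by omega)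
    rw [sub_add_cancel] at e
    rw [← e]
    by_cases hp : 1 ≤ P
    · rw [ih (P-1) (Q-1) (by omega) (by omega) (by omega) (by omega) (by omega)]
      have hPQ : P - 1 - (Q - 1) = P - Q := by ring
      rw [hPQ]
      split_ifs with hle hle2 hle2 <;> first | rfl | (exfalso; omega)
    · rw [Bc_out r M _ _ (by omega), if_neg (by omega)]

lemma decomp (r : ℕ) (M : Matrix (Fin r × Fin 2) (Fin r × Fin 2) ℝ) (p q : Fin r) (i j : Fin 2) :
    M (p, i) (q, j) = Zmat (Bc r M (p : ℤ) (q : ℤ)) i j + Wmat (Gc r M (p : ℤ) (q : ℤ)) i j := by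
  have m00 := EE_eq r M ((p:ℕ):ℤ) ((q:ℕ):ℤ) p q 0 0 rfl rfl
  have m01 := EE_eq r M ((p:ℕ):ℤ) ((q:ℕ):ℤ) p q 0 1 rfl rfl
  have m10 := EE_eq r M ((p:ℕ):ℤ) ((q:ℕ):ℤ) p q 1 0 rfl rfl
  have m11 := EE_eq r M ((p:ℕ):ℤ) ((q:ℕ):ℤ) p q 1 1 rfl rfl
  fin_cases i <;> fin_cases j <;>
    simp [Zmat, Wmat, Bc, Gc, m00, m01, m10, m11] <;> ring

lemma commutant_structure (r : ℕ) (M : Matrix (Fin r × Fin 2) (Fin r × Fin 2) ℝ)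
    (hM : M * Amat Complex.I r = Amat Complex.I r * M) :
    ∃ a : Fin r → ℂ, M = Lmat r a := by
  refine ⟨fun k => Bc r M (k : ℤ) 0, ?_⟩
  ext ⟨p, i⟩ ⟨q, j⟩
  rw [Lmat_apply, decomp r M p q i j,
    gamma_vanish r M hM ((p:ℕ):ℤ) ((q:ℕ):ℤ) (by omega) (by exact_mod_cast p.isLt)
      (by omega) (by exact_mod_cast q.isLt),
    Wmat_zero,
    beta_toeplitz r M hM (q : ℕ) ((p:ℕ):ℤ) ((q:ℕ):ℤ) (by omega) (by exact_mod_cast p.isLt)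
      (by omega) (by exact_mod_cast q.isLt) (by simp)]
  by_cases hle : (q : ℕ) ≤ (p : ℕ)
  · rw [if_pos (by exact_mod_cast hle), dif_pos hle]
    have hco : (((⟨(p:ℕ) - (q:ℕ), lt_of_le_of_lt (Nat.sub_le _ _) p.isLt⟩ : Fin r) : ℕ) : ℤ)
        = ((p:ℕ):ℤ) - ((q:ℕ):ℤ) := by
      simp only [Fin.val_mk]
      omega
    rw [← hco]
    simp
  · rw [if_neg (by omega), dif_neg hle, Zmat_zero]
    simp
lemma Phi_inj (r : ℕ) (v : Fin 3 → Fin r → ℂ) (h : Phi r v = 0) : v = 0 := by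
  have hz : ∀ i : Fin 3, Lmat r (v i) = 0 := by
    intro i
    fin_cases i
    · have h22 := congrArg Matrix.toBlocks₂₂ h
      simp only [Phi, Matrix.toBlocks_fromBlocks₂₂] at h22
      have : Matrix.toBlocks₂₂ (0 : Matrix ((Fin r × Fin 2) ⊕ (Fin r × Fin 2))
          ((Fin r × Fin 2) ⊕ (Fin r × Fin 2)) ℝ) = 0 := rfl
      rw [this, neg_eq_zero] at h22
      exact h22
    · have h12 := congrArg Matrix.toBlocks₁₂ h
      simp only [Phi, Matrix.toBlocks_fromBlocks₁₂] at h12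
      have hz : Matrix.toBlocks₁₂ (0 : Matrix ((Fin r × Fin 2) ⊕ (Fin r × Fin 2))
          ((Fin r × Fin 2) ⊕ (Fin r × Fin 2)) ℝ) = 0 := rfl
      rw [hz] at h12
      have := congrArg (fun Y => Smat r * Y) h12
      simpa [← mul_assoc, Smat_mul_Smat] using this
    · have h21 := congrArg Matrix.toBlocks₂₁ h
      simp only [Phi, Matrix.toBlocks_fromBlocks₂₁] at h21
      have hz : Matrix.toBlocks₂₁ (0 : Matrix ((Fin r × Fin 2) ⊕ (Fin r × Fin 2))
          ((Fin r × Fin 2) ⊕ (Fin r × Fin 2)) ℝ) = 0 := rfl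
      rw [hz] at h21
      have := congrArg (fun Y => Y * Smat r) h21
      simpa [mul_assoc, Smat_mul_Smat] using this
  funext i
  exact Lmat_eq_zero (hz i)

noncomputable def PhiL (r : ℕ) : (Fin 3 → Fin r → ℂ) →ₗ[ℝ]
    Matrix ((Fin r × Fin 2) ⊕ (Fin r × Fin 2)) ((Fin r × Fin 2) ⊕ (Fin r × Fin 2)) ℝ where
  toFun := Phi r
  map_add' v w := by
    simp only [Phi, Pi.add_apply, Lmat_add, Matrix.transpose_add, Matrix.mul_add,
      Matrix.add_mul, neg_add, Matrix.fromBlocks_add]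
  map_smul' t v := by
    simp only [Phi, Pi.smul_apply, Lmat_smul, Matrix.transpose_smul, Matrix.mul_smul,
      Matrix.smul_mul, RingHom.id_apply, Matrix.fromBlocks_smul, smul_neg]

lemma Phi_surj (r : ℕ) (X : Matrix ((Fin r × Fin 2) ⊕ (Fin r × Fin 2))
      ((Fin r × Fin 2) ⊕ (Fin r × Fin 2)) ℝ)
    (hX1 : T1mat r * X + Xᵀ * T1mat r = 0)
    (hX2 : T2mat (Amat Complex.I r) * X + Xᵀ * T2mat (Amat Complex.I r) = 0) :
    ∃ v, Phi r v = X := by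
  set P := X.toBlocks₁₁ with hP
  set Q := X.toBlocks₁₂ with hQ
  set R := X.toBlocks₂₁ with hR
  set S₂ := X.toBlocks₂₂ with hS2
  have hXb : X = Matrix.fromBlocks P Q R S₂ := (Matrix.fromBlocks_toBlocks X).symm
  rw [hXb, T1mat, Matrix.fromBlocks_transpose, Matrix.fromBlocks_multiply,
    Matrix.fromBlocks_multiply, Matrix.fromBlocks_add, ← Matrix.fromBlocks_zero,
    Matrix.fromBlocks_inj] at hX1
  obtain ⟨e11, e12, -, e22⟩ := hX1
  rw [hXb, T2mat, Matrix.fromBlocks_transpose, Matrix.fromBlocks_multiply,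
    Matrix.fromBlocks_multiply, Matrix.fromBlocks_add, ← Matrix.fromBlocks_zero,
    Matrix.fromBlocks_inj] at hX2
  obtain ⟨f11, f12, f21, f22⟩ := hX2
  simp only [Matrix.zero_mul, Matrix.mul_zero, Matrix.one_mul, Matrix.mul_one,
    Matrix.neg_mul, Matrix.mul_neg, zero_add, add_zero] at e11 e12 e22 f11 f12 f21 f22
  -- e11 : R + -Rᵀ = 0 ; e12 : S₂ + Pᵀ = 0 ; e22 : -Q + Qᵀ = 0
  have hRsym : Rᵀ = R := by
    have := sub_eq_zero.1 (by simpa [sub_eq_add_neg] using e11)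
    exact this.symm
  have hQsym : Qᵀ = Q := by
    have : Qᵀ - Q = 0 := by simpa [sub_eq_add_neg, add_comm] using e22
    exact sub_eq_zero.1 this
  have hSP : S₂ = -Pᵀ := by
    have : S₂ = -Pᵀ := by
      have := e12
      linear_combination (norm := module) this
    exact this
  -- f12 : A * S₂ + Pᵀ * A = 0
  have hPcomm : Pᵀ * Amat Complex.I r = Amat Complex.I r * Pᵀ := by
    rw [hSP] at f12
    have : -(Amat Complex.I r * Pᵀ) + Pᵀ * Amat Complex.I r = 0 := by simpa using f12
    linear_combination (norm := module) this
  -- f22 : -(Aᵀ * Q) + Qᵀ * A = 0  →  Aᵀ Q = Q A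
  have hQA : (Amat Complex.I r)ᵀ * Q = Q * Amat Complex.I r := by
    have h' : (Amat Complex.I r)ᵀ * Q = Qᵀ * Amat Complex.I r := by
      linear_combination (norm := module) -f22
    rw [hQsym] at h'
    exact h'
  -- f11 : A * R + -(Rᵀ * Aᵀ) = 0 → A R = R Aᵀ
  have hRA : Amat Complex.I r * R = R * (Amat Complex.I r)ᵀ := by
    have h' : Amat Complex.I r * R = Rᵀ * (Amat Complex.I r)ᵀ := by
      linear_combination (norm := module) f11
    rw [hRsym] at h'
    exact h'
  obtain ⟨a, ha⟩ := commutant_structure r Pᵀ hPcomm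
  have hM2 : (Smat r * Q) * Amat Complex.I r = Amat Complex.I r * (Smat r * Q) := by
    calc (Smat r * Q) * Amat Complex.I r = Smat r * ((Amat Complex.I r)ᵀ * Q) := by
          rw [mul_assoc, hQA]
      _ = (Smat r * (Amat Complex.I r)ᵀ) * Q := by rw [mul_assoc]
      _ = Amat Complex.I r * (Smat r * Q) := by
          rw [← Amat_mul_Smat, mul_assoc]
  obtain ⟨b, hb⟩ := commutant_structure r (Smat r * Q) hM2
  have hM3 : (R * Smat r) * Amat Complex.I r = Amat Complex.I r * (R * Smat r) := by
    calc (R * Smat r) * Amat Complex.I r = R * ((Amat Complex.I r)ᵀ * Smat r) := by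
          rw [mul_assoc, AmatT_mul_Smat]
      _ = (R * (Amat Complex.I r)ᵀ) * Smat r := by rw [mul_assoc]
      _ = Amat Complex.I r * (R * Smat r) := by rw [← hRA, mul_assoc]
  obtain ⟨d, hd⟩ := commutant_structure r (R * Smat r) hM3
  refine ⟨![a, b, d], ?_⟩
  rw [hXb, Phi]
  have hv0 : (![a, b, d] : Fin 3 → Fin r → ℂ) 0 = a := rfl
  have hv1 : (![a, b, d] : Fin 3 → Fin r → ℂ) 1 = b := rfl
  have hv2 : (![a, b, d] : Fin 3 → Fin r → ℂ) 2 = d := rfl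
  rw [hv0, hv1, hv2, ← ha, ← hb, ← hd]
  have hQ' : Smat r * (Smat r * Q) = Q := by rw [← mul_assoc, Smat_mul_Smat, one_mul]
  have hR' : (R * Smat r) * Smat r = R := by rw [mul_assoc, Smat_mul_Smat, mul_one]
  rw [hQ', hR', Matrix.transpose_transpose, hSP]
/-- For the fat algebra `n_{(i,r)}`, the Lie algebra
`g₀ = {X : T₁X + XᵀT₁ = 0, T₂X + XᵀT₂ = 0}` has real dimension `6r`. -/
theorem stmt18 (r : ℕ) (hr : 0 < r)
    (W : Submodule ℝ (Matrix ((Fin r × Fin 2) ⊕ (Fin r × Fin 2))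
      ((Fin r × Fin 2) ⊕ (Fin r × Fin 2)) ℝ))
    (hW : (W : Set (Matrix ((Fin r × Fin 2) ⊕ (Fin r × Fin 2))
        ((Fin r × Fin 2) ⊕ (Fin r × Fin 2)) ℝ)) =
      {X | T1mat r * X + Xᵀ * T1mat r = 0 ∧
           T2mat (Amat Complex.I r) * X + Xᵀ * T2mat (Amat Complex.I r) = 0}) :
    Module.finrank ℝ W = 6 * r := by
  have hrange : W = LinearMap.range (PhiL r) := by
    apply le_antisymm
    · intro X hX
      have hX' : X ∈ {X : Matrix ((Fin r × Fin 2) ⊕ (Fin r × Fin 2))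
          ((Fin r × Fin 2) ⊕ (Fin r × Fin 2)) ℝ |
            T1mat r * X + Xᵀ * T1mat r = 0 ∧
            T2mat (Amat Complex.I r) * X + Xᵀ * T2mat (Amat Complex.I r) = 0} := by
        rw [← hW]
        exact hX
      obtain ⟨v, hv⟩ := Phi_surj r X hX'.1 hX'.2
      exact ⟨v, hv⟩
    · rintro X ⟨v, rfl⟩
      have : Phi r v ∈ (W : Set _) := by
        rw [hW]
        exact ⟨Phi_mem1 r v, Phi_mem2 r v⟩
      exact this
  have hinj : Function.Injective (PhiL r) := by
    rw [← LinearMap.ker_eq_bot, LinearMap.ker_eq_bot']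
    intro v hv
    exact Phi_inj r v hv
  rw [hrange, LinearMap.finrank_range_of_inj hinj]
  rw [Module.finrank_pi_fintype ℝ]
  simp only [Module.finrank_pi_fintype ℝ (M := fun _ : Fin r => ℂ),
    Complex.finrank_real_complex, Finset.sum_const, Finset.card_univ, Fintype.card_fin,
    smul_eq_mul]
  ring
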